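/- Let c = c_◁ s_aff c_▷ be a Coxeter element in the Weyl group of an affine root system of rank n. There exists a unique generalized 1-eigenvector γ_c of c contained in the subspace V_fin, i.e. a unique γ_c ∈ V_fin with (c − 1)γ_c = δ. Moreover, γ_c is the unique vector v ∈ V_fin that is fixed by c_◁ t_θ c_▷ and satisfies K(θ^∨, c_▷ v) = 1. -/

import Mathlib

open scoped BigOperators

noncomputable section

/-- A symmetrizable generalized Cartan matrix of affine type, together with the
coefficient vector `dz` of the primitive positive imaginary root `δ` spanning the
(one dimensional) kernel of the associated symmetric bilinear form. -/
structure AffineGCM (n : ℕ) where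
  /-- the generalized Cartan matrix -/
  a : Matrix (Fin n) (Fin n) ℤ
  /-- symmetrizing factors -/
  d : Fin n → ℝ
  diag : ∀ i, a i i = 2
  offdiag : ∀ i j, i ≠ j → a i j ≤ 0
  d_pos : ∀ i, 0 < d i
  symmetrizable : ∀ i j, d i * (a i j : ℝ) = d j * (a j i : ℝ)
  /-- `K` is positive semidefinite (on the real span of the simple roots) -/
  posSemidef : ∀ g : Fin n → ℝ, 0 ≤ ∑ i, ∑ j, g i * g j * (d i * (a i j : ℝ))
  /-- `K` is not positive definite -/
  not_posDef : ∃ g : Fin n → ℝ, g ≠ 0 ∧ ∑ i, ∑ j, g i * g j * (d i * (a i j : ℝ)) = 0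
  /-- the restriction of `K` to the span of every proper subset of the simple roots
  is positive definite -/
  proper_posDef : ∀ J : Finset (Fin n), J ≠ Finset.univ →
    ∀ g : Fin n → ℝ, (∀ i, i ∉ J → g i = 0) → g ≠ 0 →
      0 < ∑ i, ∑ j, g i * g j * (d i * (a i j : ℝ))
  /-- coordinates of the positive imaginary root `δ` in the basis of simple roots -/
  dz : Fin n → ℤ
  dz_pos : ∀ i, 0 < dz i
  /-- `δ` is the imaginary root closest to the origin: its coordinates are coprime -/
  dz_prim : Finset.univ.gcd dz = 1
  /-- `δ` spans the kernel of `K` -/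
  dz_ker : ∀ j, ∑ i, (dz i : ℝ) * (d i * (a i j : ℝ)) = 0

namespace AffineGCM

variable {n : ℕ}

/-- The ambient vector space `V`, with the simple roots as standard basis. -/
abbrev V (n : ℕ) := Fin n → ℂ

/-- the simple root `α i` (the `i`-th standard basis vector) -/
def α (i : Fin n) : V n := Pi.single i 1

/-- a vector is *positive* if it lies in the nonnegative real span of the simple roots -/
def IsPosRoot (v : V n) : Prop := ∀ i, 0 ≤ (v i).re ∧ (v i).im = 0

/-- a vector is *negative* if it lies in the nonpositive real span of the simple roots -/
def IsNegRoot (v : V n) : Prop := ∀ i, (v i).re ≤ 0 ∧ (v i).im = 0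

/-- the `g`-orbit of `x`: all `g ^ k • x` for integers `k` -/
def orbit (g : V n ≃ₗ[ℂ] V n) (x : V n) : Set (V n) := Set.range fun k : ℤ => (g ^ k) x

/-- `U g`: the span of all eigenvectors of `g`, i.e. the direct sum of its eigenspaces -/
def eigSpan (g : V n ≃ₗ[ℂ] V n) : Submodule ℂ (V n) :=
  ⨆ μ : ℂ, Module.End.eigenspace (g : Module.End ℂ (V n)) μ

/-- the span `V_fin` of the simple roots other than `α aff` -/
def Vfin (aff : Fin n) : Submodule ℂ (V n) :=
  Submodule.span ℂ (α '' {i : Fin n | i ≠ aff})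

variable (C : AffineGCM n)

/-- the simple coroot `α i ^ ∨ = (d i)⁻¹ • α i` -/
def coroot (i : Fin n) : V n := ((C.d i : ℂ))⁻¹ • α i

/-- The symmetric bilinear form `K`, determined by `K (coroot i) (α j) = a i j`,
that is, `K (α i) (α j) = d i * a i j`. -/
def K : V n →ₗ[ℂ] V n →ₗ[ℂ] ℂ :=
  LinearMap.mk₂ ℂ
    (fun x y => ∑ i, ∑ j, x i * y j * ((C.d i : ℂ) * (C.a i j : ℂ)))
    (fun x x' y => by
      simp only [Pi.add_apply, add_mul, Finset.sum_add_distrib])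
    (fun r x y => by
      simp only [Pi.smul_apply, smul_eq_mul, Finset.mul_sum]
      exact Finset.sum_congr rfl fun i _ => Finset.sum_congr rfl fun j _ => by ring)
    (fun x y y' => by
      simp only [Pi.add_apply, mul_add, add_mul, Finset.sum_add_distrib])
    (fun r x y => by
      simp only [Pi.smul_apply, smul_eq_mul, Finset.mul_sum]
      exact Finset.sum_congr rfl fun i _ => Finset.sum_congr rfl fun j _ => by ring)

/-- the linear map `v ↦ v - K x v • y`; reflections are special cases -/
def reflMap (x y : V n) : V n →ₗ[ℂ] V n where
  toFun v := v - C.K x v • y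
  map_add' u v := by simp only [map_add, add_smul]; abel
  map_smul' r u := by simp only [map_smul, smul_eq_mul, RingHom.id_apply, smul_sub, smul_smul]

lemma reflMap_apply (x y v : V n) : C.reflMap x y v = v - C.K x v • y := rfl

/-- the simple reflection `s i` as a linear endomorphism -/
def sLin (i : Fin n) : V n →ₗ[ℂ] V n := C.reflMap (C.coroot i) (α i)

lemma K_α_α (i j : Fin n) : C.K (α i) (α j) = (C.d i : ℂ) * (C.a i j : ℂ) := by
  simp [K, α, LinearMap.mk₂_apply, Pi.single_apply, ite_mul, zero_mul,
    Finset.sum_ite_eq', Finset.mem_univ]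

lemma K_coroot_α (i j : Fin n) : C.K (C.coroot i) (α j) = (C.a i j : ℂ) := by
  have hd : (C.d i : ℂ) ≠ 0 := by exact_mod_cast ne_of_gt (C.d_pos i)
  simp only [coroot, map_smul, LinearMap.smul_apply, smul_eq_mul, K_α_α]
  field_simp

lemma sLin_invol (i : Fin n) (v : V n) : C.sLin i (C.sLin i v) = v := by
  have h2 : C.K (C.coroot i) (α i) = 2 := by
    rw [K_coroot_α, C.diag]; norm_num
  simp only [sLin, reflMap_apply, map_sub, map_smul, h2, smul_eq_mul]
  module

/-- the simple reflection `s i` -/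
def s (i : Fin n) : V n ≃ₗ[ℂ] V n :=
  LinearEquiv.ofLinear (C.sLin i) (C.sLin i)
    (LinearMap.ext fun v => C.sLin_invol i v) (LinearMap.ext fun v => C.sLin_invol i v)

/-- the Weyl group `W`, as a subgroup of the group of linear automorphisms of `V` -/
def Wgroup : Subgroup (V n ≃ₗ[ℂ] V n) := Subgroup.closure (Set.range C.s)

/-- the Coxeter element `c = s 1 * s 2 * ⋯ * s n` -/
def cox : V n ≃ₗ[ℂ] V n := (List.ofFn C.s).prod

/-- the positive imaginary root `δ` -/
def δv : V n := fun i => ((C.dz i : ℤ) : ℂ)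

/-- the set of real roots: `W`-images of the simple roots -/
def realRoots : Set (V n) := {v | ∃ w ∈ C.Wgroup, ∃ i, w (α i) = v}

/-- the root system `Φ`: real roots together with the imaginary roots `k • δ`, `k ≠ 0` -/
def Φ : Set (V n) := C.realRoots ∪ {v | ∃ k : ℤ, k ≠ 0 ∧ v = (k : ℂ) • C.δv}

/-- `T→ = {α 1, s 1 α 2, …, s 1 ⋯ s (n-1) α n}` -/
def Tproj : Set (V n) :=
  Set.range fun k : Fin n => ((List.ofFn C.s).take k.val).prod (α k)

/-- `T← = {α n, s n α (n-1), …, s n ⋯ s 2 α 1}` -/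
def Tinj : Set (V n) :=
  Set.range fun k : Fin n => ((List.ofFn C.s).reverse.take (n - 1 - k.val)).prod (α k)

/-- `Φ_fin`, the finite root system `Φ ∩ V_fin` -/
def Φfin (aff : Fin n) : Set (V n) := C.Φ ∩ (Vfin aff : Set (V n))

/-- the root `θ = δ - [δ : α aff] • α aff` of `Φ_fin` -/
def θv (aff : Fin n) : V n := C.δv - ((C.dz aff : ℤ) : ℂ) • α aff

/-- the reflection `t β : v ↦ v - K (β^∨) v • β` in a (real) root `β`,
where `β^∨ = (2 / K β β) • β` -/
def tRefl (β : V n) : V n →ₗ[ℂ] V n := C.reflMap ((2 / C.K β β) • β) β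

/-- `c_◁ = s 1 * ⋯ * s (aff - 1)` -/
def cleft (aff : Fin n) : V n →ₗ[ℂ] V n := ((List.ofFn C.sLin).take aff.val).prod

/-- `c_▷ = s (aff + 1) * ⋯ * s n` -/
def cright (aff : Fin n) : V n →ₗ[ℂ] V n := ((List.ofFn C.sLin).drop (aff.val + 1)).prod

/-- `Υ^fin = Φ_fin ∩ U c` -/
def Υfin (aff : Fin n) : Set (V n) := C.Φfin aff ∩ (eigSpan C.cox : Set (V n))

/-- `B` is a simple system for a set `Θ` of roots: a linearly independent subset of `Θ`
such that every element of `Θ` is a nonnegative or a nonpositive combination of `B`. -/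
def IsSimpleSystem (Θ : Set (V n)) (B : Finset (V n)) : Prop :=
  ↑B ⊆ Θ ∧ LinearIndependent ℂ (fun b : B => (b : V n)) ∧
    ∀ v ∈ Θ, ∃ g : V n → ℝ, ((∀ b ∈ B, 0 ≤ g b) ∨ (∀ b ∈ B, g b ≤ 0)) ∧
      v = ∑ b ∈ B, (g b : ℂ) • b

/-- two roots of `Θ` are connected if they are joined by a chain of roots of `Θ`
that are pairwise non-orthogonal (with respect to `K`) -/
def Connected (Θ : Set (V n)) (x y : V n) : Prop :=
  Relation.ReflTransGen (fun u v => u ∈ Θ ∧ v ∈ Θ ∧ C.K u v ≠ 0) x y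

/-- the irreducible component of `x` in `Θ` -/
def component (Θ : Set (V n)) (x : V n) : Set (V n) := {y | y ∈ Θ ∧ C.Connected Θ x y}

/-- a set of roots is of finite type `A` if it consists exactly of the vectors
`±(β i + β (i+1) + ⋯ + β j)` for a linearly independent family `β 1, …, β k` -/
def IsTypeA (Θ : Set (V n)) : Prop :=
  ∃ (k : ℕ) (β : Fin k → V n), LinearIndependent ℂ β ∧ (∀ i, β i ∈ Θ) ∧
    Θ = {v | ∃ i j : Fin k, i ≤ j ∧
      (v = ∑ l ∈ Finset.Icc i j, β l ∨ v = -∑ l ∈ Finset.Icc i j, β l)}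

/-- `Ω = {β 1, t (β 1) (β 2), …, t (β 1) ⋯ t (β (m-1)) (β m)}` for an ordered
tuple `β` of roots -/
def Ωset {m : ℕ} (β : Fin m → V n) : Set (V n) :=
  Set.range fun j : Fin m => (((List.ofFn fun i => C.tRefl (β i)).take j.val).prod) (β j)

/-- `s i` is initial in a Coxeter element `c` if `c` is the product of a permutation
of all the simple reflections starting with `s i` -/
def IsInitial (i : Fin n) (c : V n ≃ₗ[ℂ] V n) : Prop :=
  ∃ l : List (Fin n), (i :: l).Perm (List.finRange n) ∧ ((i :: l).map C.s).prod = c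

/-- `s i` is final in a Coxeter element `c` if `c` is the product of a permutation
of all the simple reflections ending with `s i` -/
def IsFinal (i : Fin n) (c : V n ≃ₗ[ℂ] V n) : Prop :=
  ∃ l : List (Fin n), (l ++ [i]).Perm (List.finRange n) ∧ ((l ++ [i]).map C.s).prod = c

/-- the skew-symmetric bilinear form `ω_c`, determined by
`ω_c (coroot i) (α j) = a i j` if `i > j`, `= 0` if `i = j`, `= -a i j` if `i < j` -/
def ω : V n →ₗ[ℂ] V n →ₗ[ℂ] ℂ :=
  LinearMap.mk₂ ℂ
    (fun x y => ∑ i, ∑ j, x i * y j *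
      ((if j < i then 1 else if i = j then 0 else -1) * ((C.d i : ℂ) * (C.a i j : ℂ))))
    (fun x x' y => by
      simp only [Pi.add_apply, add_mul, Finset.sum_add_distrib])
    (fun r x y => by
      simp only [Pi.smul_apply, smul_eq_mul, Finset.mul_sum]
      exact Finset.sum_congr rfl fun i _ => Finset.sum_congr rfl fun j _ => by ring)
    (fun x y y' => by
      simp only [Pi.add_apply, mul_add, add_mul, Finset.sum_add_distrib])
    (fun r x y => by
      simp only [Pi.smul_apply, smul_eq_mul, Finset.mul_sum]
      exact Finset.sum_congr rfl fun i _ => Finset.sum_congr rfl fun j _ => by ring)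

/-! ### Auxiliary lemmas for Proposition 3.1(2) -/

lemma K_apply (x y : V n) :
    C.K x y = ∑ i, ∑ j, x i * y j * ((C.d i : ℂ) * (C.a i j : ℂ)) := rfl

lemma M_symm (i j : Fin n) :
    (C.d i : ℂ) * (C.a i j : ℂ) = (C.d j : ℂ) * (C.a j i : ℂ) := by
  have h := congrArg (fun r : ℝ => (r : ℂ)) (C.symmetrizable i j)
  push_cast at h
  exact h

lemma K_symm (x y : V n) : C.K x y = C.K y x := by
  rw [K_apply, K_apply, Finset.sum_comm]
  refine Finset.sum_congr rfl fun i _ => Finset.sum_congr rfl fun j _ => ?_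
  rw [C.M_symm j i]; ring

lemma δv_apply (i : Fin n) : C.δv i = (C.dz i : ℂ) := rfl

lemma dz_ne (i : Fin n) : ((C.dz i : ℤ) : ℂ) ≠ 0 := by
  exact_mod_cast ne_of_gt (C.dz_pos i)

lemma d_ne (i : Fin n) : ((C.d i : ℝ) : ℂ) ≠ 0 := by
  exact_mod_cast ne_of_gt (C.d_pos i)

lemma row_ker (j : Fin n) :
    ∑ i, ((C.dz i : ℤ) : ℂ) * ((C.d i : ℂ) * (C.a i j : ℂ)) = 0 := by
  have h := congrArg (fun r : ℝ => (r : ℂ)) (C.dz_ker j)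
  push_cast at h
  simpa using h

lemma K_δ_left (y : V n) : C.K C.δv y = 0 := by
  rw [K_apply, Finset.sum_comm]
  refine Finset.sum_eq_zero fun j _ => ?_
  have : ∑ i, C.δv i * y j * ((C.d i : ℂ) * (C.a i j : ℂ))
      = y j * ∑ i, ((C.dz i : ℤ) : ℂ) * ((C.d i : ℂ) * (C.a i j : ℂ)) := by
    rw [Finset.mul_sum]
    exact Finset.sum_congr rfl fun i _ => by rw [δv_apply]; ring
  rw [this, row_ker, mul_zero]

lemma K_δ_right (y : V n) : C.K y C.δv = 0 := by rw [K_symm, K_δ_left]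

lemma K_α_left (i : Fin n) (y : V n) :
    C.K (α i) y = ∑ j, y j * ((C.d i : ℂ) * (C.a i j : ℂ)) := by
  rw [K_apply]
  rw [Finset.sum_eq_single i]
  · exact Finset.sum_congr rfl fun j _ => by simp [α, Pi.single_eq_same]
  · intro k _ hk
    refine Finset.sum_eq_zero fun j _ => ?_
    simp [α, Pi.single_eq_of_ne hk]
  · intro h; exact absurd (Finset.mem_univ i) h

lemma K_coroot_left (i : Fin n) (y : V n) :
    C.K (C.coroot i) y = ∑ j, y j * (C.a i j : ℂ) := by
  have hd := C.d_ne i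
  simp only [coroot, map_smul, LinearMap.smul_apply, smul_eq_mul, K_α_left, Finset.mul_sum]
  exact Finset.sum_congr rfl fun j _ => by field_simp

lemma K_coroot_eq (i : Fin n) (y : V n) :
    C.K (C.coroot i) y = ((C.d i : ℂ))⁻¹ * C.K (α i) y := by
  simp only [coroot, map_smul, LinearMap.smul_apply, smul_eq_mul]

lemma sLin_apply' (i : Fin n) (v : V n) :
    C.sLin i v = v - (C.K (C.coroot i) v) • α i := rfl

lemma δ_row (i : Fin n) : ∑ j, C.δv j * (C.a i j : ℂ) = 0 := by
  have hd := C.d_ne i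
  have h := C.row_ker i
  have key : ∑ j, C.δv j * (C.a i j : ℂ)
      = (C.d i : ℂ)⁻¹ * ∑ j, ((C.dz j : ℤ) : ℂ) * ((C.d j : ℂ) * (C.a j i : ℂ)) := by
    rw [Finset.mul_sum]
    refine Finset.sum_congr rfl fun j _ => ?_
    rw [← C.M_symm i j, δv_apply]
    field_simp
  rw [key, h, mul_zero]

lemma sLin_δ (i : Fin n) : C.sLin i C.δv = C.δv := by
  rw [sLin_apply', K_coroot_left, δ_row, zero_smul, sub_zero]

lemma v_eq_sum (v : V n) : v = ∑ i, v i • α i := by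
  have h : ∀ i : Fin n, v i • α i = Pi.single i (v i) := by
    intro i
    funext j
    rcases eq_or_ne j i with rfl | hne
    · simp [α, Pi.single_eq_same]
    · simp [α, Pi.single_eq_of_ne hne]
  rw [funext h, Finset.univ_sum_single]

lemma mem_Vfin {aff : Fin n} {v : V n} : v ∈ Vfin aff ↔ v aff = 0 := by
  constructor
  · intro h
    have hle : Vfin aff ≤ LinearMap.ker (LinearMap.proj (R := ℂ) (φ := fun _ : Fin n => ℂ) aff) := by
      rw [Vfin, Submodule.span_le]
      rintro x ⟨i, hi, rfl⟩
      simp only [SetLike.mem_coe, LinearMap.mem_ker, LinearMap.proj_apply]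
      exact Pi.single_eq_of_ne (Ne.symm hi) 1
    exact hle h
  · intro h
    have hv : v = ∑ i ∈ Finset.univ.erase aff, v i • α i := by
      rw [Finset.sum_erase _ (by rw [h, zero_smul])]
      exact v_eq_sum v
    rw [hv]
    refine Submodule.sum_mem _ fun i hi => Submodule.smul_mem _ _ ?_
    exact Submodule.subset_span ⟨i, (Finset.mem_erase.mp hi).1, rfl⟩

lemma sLin_coord (i : Fin n) (v : V n) {k : Fin n} (hk : k ≠ i) :
    C.sLin i v k = v k := by
  rw [sLin_apply']
  simp [α, Pi.single_eq_of_ne hk]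

lemma sLin_mem_Vfin {aff i : Fin n} (hi : i ≠ aff) {v : V n} (hv : v ∈ Vfin aff) :
    C.sLin i v ∈ Vfin aff := by
  rw [mem_Vfin] at hv ⊢
  rw [C.sLin_coord i v (Ne.symm hi)]
  exact hv

/-- partial products of the simple reflections from the left -/
def Pprod (k : ℕ) : V n →ₗ[ℂ] V n := ((List.ofFn C.sLin).take k).prod

/-- partial products of the simple reflections from the right -/
def Qprod (k : ℕ) : V n →ₗ[ℂ] V n := ((List.ofFn C.sLin).drop k).prod

lemma Pprod_zero : C.Pprod 0 = 1 := rfl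

lemma Pprod_succ {k : ℕ} (hk : k < n) :
    C.Pprod (k + 1) = C.Pprod k * C.sLin ⟨k, hk⟩ := by
  unfold Pprod
  rw [List.prod_take_succ _ k (by simpa using hk)]
  congr 1
  simp

lemma Qprod_top : C.Qprod n = 1 := by
  unfold Qprod
  rw [List.drop_eq_nil_of_le (by simp)]
  rfl

lemma Qprod_succ {k : ℕ} (hk : k < n) :
    C.Qprod k = C.sLin ⟨k, hk⟩ * C.Qprod (k + 1) := by
  unfold Qprod
  rw [List.drop_eq_getElem_cons (by simpa using hk), List.prod_cons]
  congr 1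
  simp

lemma Pprod_n_eq : C.Pprod n = C.Qprod 0 := by
  unfold Pprod Qprod
  rw [List.drop_zero, List.take_of_length_le (by simp)]

lemma prod_map_coe (l : List (Fin n)) (v : V n) :
    ((l.map C.s).prod : V n ≃ₗ[ℂ] V n) v = ((l.map C.sLin).prod) v := by
  induction l with
  | nil => rfl
  | cons i l ih =>
    simp only [List.map_cons, List.prod_cons]
    have h1 : (C.s i * (l.map C.s).prod) v = C.s i ((l.map C.s).prod v) := rfl
    have h2 : (C.sLin i * (l.map C.sLin).prod) v = C.sLin i ((l.map C.sLin).prod v) := rfl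
    rw [h1, h2, ih]
    rfl

lemma cox_apply (v : V n) : C.cox v = C.Pprod n v := by
  have h : C.cox = ((List.finRange n).map C.s).prod := by
    rw [cox, List.ofFn_eq_map]
  rw [h, prod_map_coe]
  unfold Pprod
  rw [List.take_of_length_le (by simp), ← List.ofFn_eq_map]

lemma Pprod_δ : ∀ k, k ≤ n → C.Pprod k C.δv = C.δv := by
  intro k
  induction k with
  | zero => intro _; rfl
  | succ k ih =>
    intro hk
    have hkn : k < n := hk
    rw [Pprod_succ C hkn, Module.End.mul_apply, sLin_δ, ih (le_of_lt hkn)]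

lemma cox_δ : C.cox C.δv = C.δv := by
  rw [cox_apply, Pprod_δ C n le_rfl]

lemma Pprod_mem_Vfin (aff : Fin n) :
    ∀ k, k ≤ aff.val → ∀ v ∈ Vfin aff, C.Pprod k v ∈ Vfin aff := by
  intro k
  induction k with
  | zero => intro _ v hv; exact hv
  | succ k ih =>
    intro hk v hv
    have hkn : k < n := lt_of_lt_of_le (Nat.lt_of_lt_of_le (Nat.lt_succ_self k) hk) aff.isLt.le
    rw [Pprod_succ C hkn, Module.End.mul_apply]
    refine ih (by omega) _ (C.sLin_mem_Vfin ?_ hv)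
    exact Fin.ne_of_val_ne (by simp; omega)

lemma Qprod_mem_Vfin (aff : Fin n) :
    ∀ m k, k + m = n → aff.val < k → ∀ v ∈ Vfin aff, C.Qprod k v ∈ Vfin aff := by
  intro m
  induction m with
  | zero =>
    intro k hk _ v hv
    have : k = n := by omega
    subst this
    rw [Qprod_top]; exact hv
  | succ m ih =>
    intro k hk hak v hv
    have hkn : k < n := by omega
    rw [Qprod_succ C hkn, Module.End.mul_apply]
    refine C.sLin_mem_Vfin (Fin.ne_of_val_ne (by simp; omega)) ?_
    exact ih (k + 1) (by omega) (by omega) v hv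

lemma θ_coord_aff (aff : Fin n) : C.θv aff aff = 0 := by
  simp [θv, δv, α, Pi.single_eq_same]

lemma θ_mem_Vfin (aff : Fin n) : C.θv aff ∈ Vfin aff :=
  mem_Vfin.mpr (C.θ_coord_aff aff)

lemma K_θ_left (aff : Fin n) (v : V n) :
    C.K (C.θv aff) v = -((C.dz aff : ℤ) : ℂ) * C.K (α aff) v := by
  rw [θv, map_sub, map_smul]
  simp only [LinearMap.sub_apply, LinearMap.smul_apply, smul_eq_mul, K_δ_left]
  ring

lemma K_θ_θ (aff : Fin n) :
    C.K (C.θv aff) (C.θv aff) = 2 * (C.d aff : ℂ) * ((C.dz aff : ℤ) : ℂ) ^ 2 := by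
  rw [K_θ_left]
  have h : C.K (α aff) (C.θv aff)
      = -(((C.dz aff : ℤ) : ℂ)) * ((C.d aff : ℂ) * ((C.a aff aff : ℤ) : ℂ)) := by
    show C.K (α aff) (C.δv - ((C.dz aff : ℤ) : ℂ) • α aff) = _
    rw [map_sub, map_smul, K_δ_right, K_α_α]
    simp only [smul_eq_mul, zero_sub]
    ring
  rw [h, C.diag aff]
  push_cast
  ring

lemma K_θ_θ_ne (aff : Fin n) : C.K (C.θv aff) (C.θv aff) ≠ 0 := by
  rw [K_θ_θ]
  exact mul_ne_zero (mul_ne_zero two_ne_zero (C.d_ne aff)) (pow_ne_zero 2 (C.dz_ne aff))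

lemma tRefl_mem_Vfin (aff : Fin n) {v : V n} (hv : v ∈ Vfin aff) :
    C.tRefl (C.θv aff) v ∈ Vfin aff := by
  rw [tRefl, reflMap_apply]
  exact sub_mem hv (Submodule.smul_mem _ _ (C.θ_mem_Vfin aff))

lemma sLin_aff_decomp (aff : Fin n) (v : V n) :
    C.sLin aff v = C.tRefl (C.θv aff) v
      + (C.K ((2 / C.K (C.θv aff) (C.θv aff)) • C.θv aff) v) • C.δv := by
  have hm := C.dz_ne aff
  have hd := C.d_ne aff
  have hscal : C.K ((2 / C.K (C.θv aff) (C.θv aff)) • C.θv aff) v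
      = -(C.K (α aff) v) / ((C.d aff : ℂ) * ((C.dz aff : ℤ) : ℂ)) := by
    rw [map_smul, LinearMap.smul_apply, smul_eq_mul, K_θ_θ, K_θ_left]
    field_simp
  rw [sLin_apply', K_coroot_eq, tRefl, reflMap_apply, hscal]
  simp only [θv]
  match_scalars
  all_goals field_simp
  all_goals ring

lemma cleft_eq (aff : Fin n) : C.cleft aff = C.Pprod aff.val := rfl

lemma cright_eq (aff : Fin n) : C.cright aff = C.Qprod (aff.val + 1) := rfl

lemma cox_split (aff : Fin n) (v : V n) :
    C.cox v = C.cleft aff (C.sLin aff (C.cright aff v)) := by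
  rw [cox_apply]
  have hlen : aff.val < (List.ofFn C.sLin).length := by simp [aff.isLt]
  have h2 : (List.ofFn C.sLin).drop aff.val
      = C.sLin aff :: (List.ofFn C.sLin).drop (aff.val + 1) := by
    rw [List.drop_eq_getElem_cons hlen]
    congr 1
    simp
  have h1 : List.ofFn C.sLin
      = (List.ofFn C.sLin).take aff.val
        ++ (C.sLin aff :: (List.ofFn C.sLin).drop (aff.val + 1)) := by
    rw [← h2, List.take_append_drop]
  show ((List.ofFn C.sLin).take n).prod v = _
  rw [List.take_of_length_le (by simp)]
  conv_lhs => rw [h1]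
  rw [List.prod_append, List.prod_cons]
  rfl

lemma cox_decomp (aff : Fin n) (v : V n) :
    C.cox v = (C.cleft aff * C.tRefl (C.θv aff) * C.cright aff) v
      + (C.K ((2 / C.K (C.θv aff) (C.θv aff)) • C.θv aff) (C.cright aff v)) • C.δv := by
  rw [cox_split C aff v, sLin_aff_decomp, map_add, map_smul]
  congr 1
  rw [cleft_eq, Pprod_δ C aff.val aff.isLt.le]

/-- the kernel of the symmetrized Cartan matrix is spanned by `dz` (real version) -/
lemma ker_real (aff : Fin n) (g : Fin n → ℝ)
    (hg : ∀ j, ∑ i, g i * (C.d i * (C.a i j : ℝ)) = 0) :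
    ∀ i, g i = (g aff / (C.dz aff : ℝ)) * (C.dz i : ℝ) := by
  have hdz : ((C.dz aff : ℤ) : ℝ) ≠ 0 := by exact_mod_cast ne_of_gt (C.dz_pos aff)
  set t : ℝ := g aff / (C.dz aff : ℝ) with ht
  set h : Fin n → ℝ := fun i => g i - t * (C.dz i : ℝ) with hh
  have h_aff : h aff = 0 := by
    rw [hh]; simp only; rw [ht]; field_simp; ring
  have hker : ∀ j, ∑ i, h i * (C.d i * (C.a i j : ℝ)) = 0 := by
    intro j
    have h2 := C.dz_ker j
    have : ∑ i, h i * (C.d i * (C.a i j : ℝ))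
        = (∑ i, g i * (C.d i * (C.a i j : ℝ)))
          - t * ∑ i, (C.dz i : ℝ) * (C.d i * (C.a i j : ℝ)) := by
      rw [Finset.mul_sum, ← Finset.sum_sub_distrib]
      exact Finset.sum_congr rfl fun i _ => by rw [hh]; ring
    rw [this, hg j, h2, mul_zero, sub_zero]
  by_cases hne : h = 0
  · intro i
    have := congrFun hne i
    simp only [hh, Pi.zero_apply] at this
    linarith [this]
  · exfalso
    have hJ : (Finset.univ.erase aff) ≠ (Finset.univ : Finset (Fin n)) := by
      intro he
      have := Finset.mem_univ aff
      rw [← he] at this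
      exact (Finset.notMem_erase aff _) this
    have hsupp : ∀ i, i ∉ Finset.univ.erase aff → h i = 0 := by
      intro i hi
      have : i = aff := by simpa using hi
      rw [this]; exact h_aff
    have hpos := C.proper_posDef _ hJ h hsupp hne
    have hzero : ∑ i, ∑ j, h i * h j * (C.d i * (C.a i j : ℝ)) = 0 := by
      rw [Finset.sum_comm]
      refine Finset.sum_eq_zero fun j _ => ?_
      have : ∑ i, h i * h j * (C.d i * (C.a i j : ℝ))
          = h j * ∑ i, h i * (C.d i * (C.a i j : ℝ)) := by
        rw [Finset.mul_sum]; exact Finset.sum_congr rfl fun i _ => by ring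
      rw [this, hker j, mul_zero]
    linarith

/-- the kernel of the symmetrized Cartan matrix is spanned by `dz` (complex version) -/
lemma ker_complex (aff : Fin n) (x : Fin n → ℂ)
    (hx : ∀ j, ∑ i, x i * ((C.d i : ℂ) * (C.a i j : ℂ)) = 0) :
    ∃ t : ℂ, ∀ i, x i = t * ((C.dz i : ℤ) : ℂ) := by
  have hcast : ∀ i j : Fin n, (C.d i : ℂ) * (C.a i j : ℂ) = ((C.d i * (C.a i j : ℝ) : ℝ) : ℂ) := by
    intro i j; push_cast; ring
  have hre : ∀ j, ∑ i, (x i).re * (C.d i * (C.a i j : ℝ)) = 0 := by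
    intro j
    have h := congrArg Complex.re (hx j)
    rw [Complex.re_sum] at h
    simp only [hcast] at h
    simpa [Complex.mul_re, Complex.ofReal_re, Complex.ofReal_im] using h
  have him : ∀ j, ∑ i, (x i).im * (C.d i * (C.a i j : ℝ)) = 0 := by
    intro j
    have h := congrArg Complex.im (hx j)
    rw [Complex.im_sum] at h
    simp only [hcast] at h
    simpa [Complex.mul_im, Complex.ofReal_re, Complex.ofReal_im] using h
  obtain h1 := C.ker_real aff _ hre
  obtain h2 := C.ker_real aff _ him
  set t1 : ℝ := (x aff).re / (C.dz aff : ℝ)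
  set t2 : ℝ := (x aff).im / (C.dz aff : ℝ)
  refine ⟨(t1 : ℂ) + (t2 : ℂ) * Complex.I, fun i => ?_⟩
  have hxi : x i = ((x i).re : ℂ) + ((x i).im : ℂ) * Complex.I := (Complex.re_add_im _).symm
  rw [hxi, h1 i, h2 i]
  push_cast
  ring

/-- a vector fixed by the Coxeter element is a multiple of `δ` -/
lemma ker_cox (aff : Fin n) {u : V n} (hu : C.cox u = u) :
    ∃ t : ℂ, ∀ i, u i = t * ((C.dz i : ℤ) : ℂ) := by
  have hQ0 : C.Qprod 0 u = u := by
    rw [← Pprod_n_eq, ← cox_apply]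
    exact hu
  have hrow : ∀ k : Fin n, C.K (C.coroot k) (C.Qprod (k.val + 1) u) = 0 := by
    intro k
    have tel : ∑ j ∈ Finset.range n, (C.Qprod j u - C.Qprod (j + 1) u) = 0 := by
      rw [Finset.sum_range_sub' (fun j => C.Qprod j u) n, hQ0, Qprod_top]
      simp
    have heval : ∀ j ∈ Finset.range n, (C.Qprod j u - C.Qprod (j + 1) u) k
        = if j = k.val then -C.K (C.coroot k) (C.Qprod (k.val + 1) u) else 0 := by
      intro j hj
      have hjn : j < n := Finset.mem_range.mp hj
      rw [Qprod_succ C hjn, Module.End.mul_apply, sLin_apply']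
      simp only [Pi.sub_apply, Pi.smul_apply, smul_eq_mul]
      rcases eq_or_ne j k.val with heq | hne
      · have hk : (⟨j, hjn⟩ : Fin n) = k := Fin.ext heq
        rw [if_pos heq, hk]
        simp only [α, Pi.single_eq_same, mul_one]
        have : k.val + 1 = j + 1 := by omega
        rw [this]
        ring
      · rw [if_neg hne]
        have hα : (α (⟨j, hjn⟩ : Fin n)) k = 0 :=
          Pi.single_eq_of_ne (fun hc => hne (congrArg Fin.val hc).symm) 1
        rw [hα]
        ring
    have hcoord : (∑ j ∈ Finset.range n, (C.Qprod j u - C.Qprod (j + 1) u)) k = 0 := by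
      rw [tel]; rfl
    rw [Finset.sum_apply, Finset.sum_congr rfl heval, Finset.sum_ite_eq' (Finset.range n) k.val]
      at hcoord
    rw [if_pos (Finset.mem_range.mpr k.isLt)] at hcoord
    exact neg_eq_zero.mp hcoord
  have hQ : ∀ m k, k + m = n → C.Qprod k u = u := by
    intro m
    induction m with
    | zero =>
      intro k hk
      have : k = n := by omega
      subst this
      rw [Qprod_top]; rfl
    | succ m ih =>
      intro k hk
      have hkn : k < n := by omega
      have hnext : C.Qprod (k + 1) u = u := ih (k + 1) (by omega)
      have h0 : C.K (C.coroot ⟨k, hkn⟩) u = 0 := by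
        have h := hrow ⟨k, hkn⟩
        simp only at h
        rwa [hnext] at h
      rw [Qprod_succ C hkn, Module.End.mul_apply, hnext, sLin_apply', h0, zero_smul, sub_zero]
  have hall : ∀ k : Fin n, C.K (C.coroot k) u = 0 := by
    intro k
    have h := hrow k
    rwa [hQ (n - (k.val + 1)) (k.val + 1) (by omega)] at h
  apply C.ker_complex aff
  intro j
  have h := hall j
  rw [K_coroot_left] at h
  have hrw : ∑ i, u i * ((C.d i : ℂ) * (C.a i j : ℂ))
      = (C.d j : ℂ) * ∑ i, u i * (C.a j i : ℂ) := by
    rw [Finset.mul_sum]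
    refine Finset.sum_congr rfl fun i _ => ?_
    rw [C.M_symm i j]; ring
  rw [hrw, h, mul_zero]

/-- `δ` lies in the image of `c - 1` -/
lemma delta_mem_range (aff : Fin n) : ∃ γ₀ : V n, C.cox γ₀ - γ₀ = C.δv := by
  by_contra hno
  push_neg at hno
  set f : V n →ₗ[ℂ] V n := C.Pprod n - LinearMap.id with hf
  have hfapp : ∀ v, f v = C.cox v - v := by
    intro v
    rw [hf, LinearMap.sub_apply, LinearMap.id_apply, cox_apply]
  have hδnot : C.δv ∉ LinearMap.range f := by
    rintro ⟨γ₀, hγ⟩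
    exact hno γ₀ (by rw [← hfapp]; exact hγ)
  set p := LinearMap.range f with hp
  have hmk : Submodule.Quotient.mk (p := p) C.δv ≠ 0 := by
    intro h
    exact hδnot ((Submodule.Quotient.mk_eq_zero p).mp h)
  obtain ⟨ψ, hψ⟩ : ∃ ψ : Module.Dual ℂ (V n ⧸ p), ψ (Submodule.Quotient.mk C.δv) ≠ 0 := by
    by_contra hall
    push_neg at hall
    exact hmk ((Module.forall_dual_apply_eq_zero_iff ℂ _).mp hall)
  set φ : V n →ₗ[ℂ] ℂ := ψ ∘ₗ p.mkQ with hφ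
  have hφf : ∀ v, φ (f v) = 0 := by
    intro v
    have hmem : f v ∈ p := LinearMap.mem_range_self f v
    have h0 : p.mkQ (f v) = 0 := (Submodule.Quotient.mk_eq_zero p).mpr hmem
    rw [hφ, LinearMap.comp_apply, h0, map_zero]
  have hφc : ∀ v, φ (C.cox v) = φ v := by
    intro v
    have h := hφf v
    rw [hfapp, map_sub] at h
    exact sub_eq_zero.mp h
  have hφδ : φ C.δv ≠ 0 := by
    simpa [hφ, Submodule.mkQ_apply] using hψ
  -- the quantities `Λ i = φ (s_1 ⋯ s_{i-1} α_i)`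
  set Λ : Fin n → ℂ := fun i => φ (C.Pprod i.val (α i)) with hΛ
  set lf : ℕ → ℂ := fun k => if h : k < n then φ (C.Pprod k (α ⟨k, h⟩)) else 0 with hlf
  have hlf_eq : ∀ i : Fin n, lf i.val = Λ i := by
    intro i
    rw [hlf, hΛ]
    simp only [i.isLt, dif_pos, Fin.eta]
  have step : ∀ (k : ℕ) (hk : k < n) (v : V n),
      φ (C.Pprod (k + 1) v)
        = φ (C.Pprod k v) - C.K (C.coroot ⟨k, hk⟩) v * φ (C.Pprod k (α ⟨k, hk⟩)) := by
    intro k hk v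
    rw [Pprod_succ C hk, Module.End.mul_apply, sLin_apply', map_sub, map_smul, map_sub,
      map_smul, smul_eq_mul]
  have hPn : ∀ v, φ (C.Pprod n v) = φ v := by
    intro v
    rw [← cox_apply]
    exact hφc v
  -- full telescoping: ∑ i a i j Λ i = 0
  have full : ∀ j : Fin n, ∑ i : Fin n, (C.a i j : ℂ) * Λ i = 0 := by
    intro j
    have tel := Finset.sum_range_sub (fun k => φ (C.Pprod k (α j))) n
    have hterm : ∀ k ∈ Finset.range n,
        φ (C.Pprod (k + 1) (α j)) - φ (C.Pprod k (α j))
          = -((if h : k < n then (C.a ⟨k, h⟩ j : ℂ) else 0) * lf k) := by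
      intro k hk
      have hkn : k < n := Finset.mem_range.mp hk
      rw [step k hkn (α j), K_coroot_α, hlf]
      simp only [hkn, dif_pos]
      ring
    rw [Finset.sum_congr rfl hterm, Finset.sum_neg_distrib, hPn (α j), Pprod_zero,
      Module.End.one_apply, sub_self, neg_eq_zero] at tel
    calc ∑ i : Fin n, (C.a i j : ℂ) * Λ i
        = ∑ i : Fin n, (if h : (i : ℕ) < n then (C.a ⟨(i : ℕ), h⟩ j : ℂ) else 0) * lf (i : ℕ) := by
          refine Finset.sum_congr rfl fun i _ => ?_
          rw [hlf_eq i]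
          simp only [i.isLt, dif_pos, Fin.eta]
      _ = ∑ k ∈ Finset.range n, (if h : k < n then (C.a ⟨k, h⟩ j : ℂ) else 0) * lf k :=
          Fin.sum_univ_eq_sum_range (fun k => (if h : k < n then (C.a ⟨k, h⟩ j : ℂ) else 0) * lf k) n
      _ = 0 := tel
  -- partial telescoping: φ (α k) = Λ k + ∑_{l < k} a l k Λ l
  have partial_ : ∀ k : Fin n,
      φ (α k) = Λ k + ∑ l ∈ Finset.range k.val,
        (if h : l < n then (C.a ⟨l, h⟩ k : ℂ) else 0) * lf l := by
    intro k
    have tel := Finset.sum_range_sub (fun l => φ (C.Pprod l (α k))) k.val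
    have hterm : ∀ l ∈ Finset.range k.val,
        φ (C.Pprod (l + 1) (α k)) - φ (C.Pprod l (α k))
          = -((if h : l < n then (C.a ⟨l, h⟩ k : ℂ) else 0) * lf l) := by
      intro l hl
      have hln : l < n := lt_trans (Finset.mem_range.mp hl) k.isLt
      rw [step l hln (α k), K_coroot_α, hlf]
      simp only [hln, dif_pos]
      ring
    rw [Finset.sum_congr rfl hterm, Finset.sum_neg_distrib, Pprod_zero, Module.End.one_apply]
      at tel
    have hΛk : φ (C.Pprod k.val (α k)) = Λ k := rfl
    rw [hΛk] at tel
    linear_combination tel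
  -- kernel lemma gives Λ i = t * d i * dz i
  obtain ⟨t, ht⟩ : ∃ t : ℂ, ∀ i, Λ i * ((C.d i : ℂ))⁻¹ = t * ((C.dz i : ℤ) : ℂ) := by
    apply C.ker_complex aff
    intro j
    calc ∑ i, (Λ i * ((C.d i : ℂ))⁻¹) * ((C.d i : ℂ) * (C.a i j : ℂ))
        = ∑ i, (C.a i j : ℂ) * Λ i := by
          refine Finset.sum_congr rfl fun i _ => ?_
          have hd := C.d_ne i
          field_simp
      _ = 0 := full j
  have hΛt : ∀ i, Λ i = t * (((C.dz i : ℤ) : ℂ) * (C.d i : ℂ)) := by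
    intro i
    have h := ht i
    have hd := C.d_ne i
    field_simp at h
    rw [h]; ring
  -- now compute φ δ = 0
  have hφδ0 : φ C.δv = 0 := by
    have hδsum : φ C.δv = ∑ k, ((C.dz k : ℤ) : ℂ) * φ (α k) := by
      conv_lhs => rw [v_eq_sum C.δv]
      rw [map_sum]
      exact Finset.sum_congr rfl fun k _ => by rw [map_smul, smul_eq_mul, δv_apply]
    set G : Fin n → Fin n → ℂ :=
      fun k l => ((C.dz k : ℤ) : ℂ) * (((C.dz l : ℤ) : ℂ) * ((C.d l : ℂ) * (C.a l k : ℂ)))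
      with hG
    have inner_eq : ∀ k : Fin n,
        ∑ l ∈ Finset.range k.val, (if h : l < n then (C.a ⟨l, h⟩ k : ℂ) else 0) * lf l
          = ∑ l : Fin n, (if l < k then (C.a l k : ℂ) * Λ l else 0) := by
      intro k
      have hfe : (Finset.range n).filter (fun l => l < k.val) = Finset.range k.val := by
        ext l
        simp only [Finset.mem_filter, Finset.mem_range]
        exact ⟨fun h => h.2, fun h => ⟨lt_trans h k.isLt, h⟩⟩
      rw [← hfe, Finset.sum_filter,
        ← Fin.sum_univ_eq_sum_range
          (fun l => if l < k.val then (if h : l < n then (C.a ⟨l, h⟩ k : ℂ) else 0) * lf l else 0) n]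
      refine Finset.sum_congr rfl fun l _ => ?_
      by_cases hlk : l < k
      · rw [if_pos (show (l : ℕ) < (k : ℕ) from hlk), if_pos hlk, hlf_eq l]
        simp only [l.isLt, dif_pos, Fin.eta]
      · rw [if_neg (show ¬ (l : ℕ) < (k : ℕ) from hlk), if_neg hlk]
    have hT : ∑ k, ∑ l, G k l = 0 := by
      refine Finset.sum_eq_zero fun k _ => ?_
      have h : ∑ l, G k l
          = ((C.dz k : ℤ) : ℂ) * ∑ l, ((C.dz l : ℤ) : ℂ) * ((C.d l : ℂ) * (C.a l k : ℂ)) := by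
        rw [Finset.mul_sum]
      rw [h, row_ker, mul_zero]
    have hsplit : ∀ k, ∑ l, G k l
        = (∑ l, if l < k then G k l else 0) + G k k + (∑ l, if k < l then G k l else 0) := by
      intro k
      have hmid : G k k = ∑ l, if l = k then G k l else 0 := by
        rw [Finset.sum_ite_eq' Finset.univ k]
        simp
      rw [hmid, ← Finset.sum_add_distrib, ← Finset.sum_add_distrib]
      refine Finset.sum_congr rfl fun l _ => ?_
      rcases lt_trichotomy l k with h | h | h
      · simp [h, ne_of_lt h, lt_asymm h]
      · simp [h, lt_irrefl]
      · simp [h, (ne_of_lt h).symm, lt_asymm h]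
    have hswap : ∑ k, ∑ l, (if k < l then G k l else 0)
        = ∑ k, ∑ l, (if l < k then G k l else 0) := by
      rw [Finset.sum_comm]
      refine Finset.sum_congr rfl fun k _ => Finset.sum_congr rfl fun l _ => ?_
      by_cases h : l < k
      · rw [if_pos h, if_pos h, hG]
        simp only
        rw [C.M_symm k l]
        ring
      · rw [if_neg h, if_neg h]
    set S : ℂ := ∑ k, ∑ l, (if l < k then G k l else 0) with hS
    have hsum : S + (∑ k, G k k) + S = 0 := by
      have h1 : ∑ k, ∑ l, G k l
          = S + (∑ k, G k k) + ∑ k, ∑ l, (if k < l then G k l else 0) := by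
        rw [hS, ← Finset.sum_add_distrib, ← Finset.sum_add_distrib]
        exact Finset.sum_congr rfl fun k _ => hsplit k
      rw [hswap] at h1
      rw [← h1]
      exact hT
    have hdiag : ∑ k, G k k = 2 * ∑ k, ((C.dz k : ℤ) : ℂ) ^ 2 * (C.d k : ℂ) := by
      rw [Finset.mul_sum]
      refine Finset.sum_congr rfl fun k _ => ?_
      rw [hG]
      simp only
      rw [C.diag k]
      push_cast
      ring
    have hSval : S = -∑ k, ((C.dz k : ℤ) : ℂ) ^ 2 * (C.d k : ℂ) := by
      have h := hsum
      rw [hdiag] at h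
      linear_combination h / 2
    have hXdef : ∑ k, ((C.dz k : ℤ) : ℂ) * Λ k
        = t * ∑ k, ((C.dz k : ℤ) : ℂ) ^ 2 * (C.d k : ℂ) := by
      rw [Finset.mul_sum]
      refine Finset.sum_congr rfl fun k _ => ?_
      rw [hΛt k]
      ring
    have hSdef : ∑ k, ∑ l, (if l < k then ((C.dz k : ℤ) : ℂ) * ((C.a l k : ℂ) * Λ l) else 0)
        = t * S := by
      rw [hS, Finset.mul_sum]
      refine Finset.sum_congr rfl fun k _ => ?_
      rw [Finset.mul_sum]
      refine Finset.sum_congr rfl fun l _ => ?_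
      by_cases h : l < k
      · rw [if_pos h, if_pos h, hΛt l, hG]
        simp only
        ring
      · rw [if_neg h, if_neg h, mul_zero]
    calc φ C.δv = ∑ k, ((C.dz k : ℤ) : ℂ) * φ (α k) := hδsum
      _ = ∑ k, (((C.dz k : ℤ) : ℂ) * Λ k
            + ∑ l, (if l < k then ((C.dz k : ℤ) : ℂ) * ((C.a l k : ℂ) * Λ l) else 0)) := by
          refine Finset.sum_congr rfl fun k _ => ?_
          rw [partial_ k, inner_eq k, mul_add, Finset.mul_sum]
          congr 1
          refine Finset.sum_congr rfl fun l _ => ?_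
          by_cases h : l < k
          · rw [if_pos h, if_pos h]
          · rw [if_neg h, if_neg h, mul_zero]
      _ = (∑ k, ((C.dz k : ℤ) : ℂ) * Λ k)
            + ∑ k, ∑ l, (if l < k then ((C.dz k : ℤ) : ℂ) * ((C.a l k : ℂ) * Λ l) else 0) :=
          Finset.sum_add_distrib
      _ = t * (∑ k, ((C.dz k : ℤ) : ℂ) ^ 2 * (C.d k : ℂ)) + t * S := by rw [hXdef, hSdef]
      _ = 0 := by rw [hSval]; ring
  exact hφδ hφδ0

/-- Proposition 3.1(2): there is a unique generalized `1`-eigenvector `γ_c` of `c`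
in `V_fin`, and it is the unique `v ∈ V_fin` fixed by `c_◁ t_θ c_▷` with
`K (θ^∨) (c_▷ v) = 1`. -/
theorem generalized_eigenvector {n : ℕ} (C : AffineGCM n) (aff : Fin n)
    (haff : ((Subgroup.closure (C.s '' {j : Fin n | j ≠ aff}) : Subgroup (V n ≃ₗ[ℂ] V n)) : Set (V n ≃ₗ[ℂ] V n)).Finite) :
    (∃! γ : V n, γ ∈ Vfin aff ∧ C.cox γ - γ = C.δv) ∧
    (∀ γ : V n, (γ ∈ Vfin aff ∧ C.cox γ - γ = C.δv) ↔
      (γ ∈ Vfin aff ∧ (C.cleft aff * C.tRefl (C.θv aff) * C.cright aff) γ = γ ∧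
        C.K ((2 / C.K (C.θv aff) (C.θv aff)) • C.θv aff) (C.cright aff γ) = 1)) := by
  clear haff
  have main_iff : ∀ γ : V n, (γ ∈ Vfin aff ∧ C.cox γ - γ = C.δv) ↔
      (γ ∈ Vfin aff ∧ (C.cleft aff * C.tRefl (C.θv aff) * C.cright aff) γ = γ ∧
        C.K ((2 / C.K (C.θv aff) (C.θv aff)) • C.θv aff) (C.cright aff γ) = 1) := by
    intro γ
    constructor
    · rintro ⟨h1, h2⟩
      set τ := C.K ((2 / C.K (C.θv aff) (C.θv aff)) • C.θv aff) (C.cright aff γ) with hτ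
      have hdec := C.cox_decomp aff γ
      have E : (C.cleft aff * C.tRefl (C.θv aff) * C.cright aff) γ - γ = (1 - τ) • C.δv := by
        have h3 : (C.cleft aff * C.tRefl (C.θv aff) * C.cright aff) γ + τ • C.δv - γ
            = C.δv := by
          rw [← hdec]; exact h2
        calc (C.cleft aff * C.tRefl (C.θv aff) * C.cright aff) γ - γ
            = ((C.cleft aff * C.tRefl (C.θv aff) * C.cright aff) γ + τ • C.δv - γ)
              - τ • C.δv := by abel
          _ = C.δv - τ • C.δv := by rw [h3]
          _ = (1 - τ) • C.δv := by rw [sub_smul, one_smul]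
      have hcr : C.cright aff γ ∈ Vfin aff := by
        rw [cright_eq]
        exact C.Qprod_mem_Vfin aff (n - (aff.val + 1)) (aff.val + 1) (by omega) (by omega) γ h1
      have htr := C.tRefl_mem_Vfin aff hcr
      have hwmem : (C.cleft aff * C.tRefl (C.θv aff) * C.cright aff) γ ∈ Vfin aff := by
        have hrfl : (C.cleft aff * C.tRefl (C.θv aff) * C.cright aff) γ
            = C.cleft aff (C.tRefl (C.θv aff) (C.cright aff γ)) := rfl
        rw [hrfl, cleft_eq]
        exact C.Pprod_mem_Vfin aff aff.val le_rfl _ htr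
      have hcoord := congrFun E aff
      have hzero : (0 : ℂ) = (1 - τ) * ((C.dz aff : ℤ) : ℂ) := by
        have h4 : ((C.cleft aff * C.tRefl (C.θv aff) * C.cright aff) γ - γ) aff = 0 := by
          rw [Pi.sub_apply, mem_Vfin.mp hwmem, mem_Vfin.mp h1, sub_zero]
        rw [h4] at hcoord
        simpa [Pi.smul_apply, smul_eq_mul, δv_apply] using hcoord
      have hτ1 : τ = 1 := by
        have h5 : 1 - τ = 0 := by
          rcases mul_eq_zero.mp hzero.symm with h | h
          · exact h
          · exact absurd h (C.dz_ne aff)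
        linear_combination -h5
      refine ⟨h1, ?_, hτ1⟩
      have h6 : (C.cleft aff * C.tRefl (C.θv aff) * C.cright aff) γ - γ = 0 := by
        rw [E, hτ1]; simp
      exact sub_eq_zero.mp h6
    · rintro ⟨h1, h2, h3⟩
      refine ⟨h1, ?_⟩
      rw [cox_decomp C aff γ, h2, h3, one_smul, add_sub_cancel_left]
  refine ⟨?_, main_iff⟩
  obtain ⟨γ₀, hγ₀⟩ := C.delta_mem_range aff
  set c0 : ℂ := γ₀ aff / ((C.dz aff : ℤ) : ℂ) with hc0
  set γ : V n := γ₀ - c0 • C.δv with hγdef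
  have hmem : γ ∈ Vfin aff := by
    rw [mem_Vfin, hγdef]
    simp only [Pi.sub_apply, Pi.smul_apply, smul_eq_mul, δv_apply]
    rw [hc0]
    have hdz := C.dz_ne aff
    field_simp
    ring
  have heq : C.cox γ - γ = C.δv := by
    rw [hγdef, map_sub, map_smul, cox_δ]
    have h7 : C.cox γ₀ - c0 • C.δv - (γ₀ - c0 • C.δv) = C.cox γ₀ - γ₀ := by abel
    rw [h7, hγ₀]
  refine ⟨γ, ⟨hmem, heq⟩, ?_⟩
  rintro y ⟨hy1, hy2⟩
  have hu : C.cox (y - γ) = y - γ := by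
    rw [map_sub]
    have e1 : C.cox y = y + C.δv := by rw [← hy2]; abel
    have e2 : C.cox γ = γ + C.δv := by rw [← heq]; abel
    rw [e1, e2]; abel
  obtain ⟨t, ht⟩ := C.ker_cox aff hu
  have h0 : (y - γ) aff = 0 := by
    rw [Pi.sub_apply, mem_Vfin.mp hy1, mem_Vfin.mp hmem, sub_zero]
  rw [ht aff] at h0
  have ht0 : t = 0 := by
    rcases mul_eq_zero.mp h0 with h | h
    · exact h
    · exact absurd h (C.dz_ne aff)
  have hyγ : y - γ = 0 := by
    funext i
    rw [Pi.zero_apply, ht i, ht0, zero_mul]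
  exact sub_eq_zero.mp hyγ

end AffineGCM
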